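/- Let V be a finite-dimensional real inner product space with inner product h, and R : V × V → End(V) a curvature-like tensor (with the standard symmetries). Fix y ∈ V nonzero and let A_y(v) = R(v,y)y. If the 'flag curvature with respect to g', K(y,v) = g(v, A_y(v)) / (g(y,y)g(v,v) − g(v,y)²), is negative for all v linearly independent from y (where g is some positive definite symmetric bilinear form), then the 'sectional curvature with respect to h', h(v, A_y(v)) / (h(y,y)h(v,v) − h(v,y)²), is negative for all v linearly independent from y. -/

import Mathlib

open scoped RealInnerProductSpace

/-- Strict Cauchy–Schwarz for a positive definite symmetric bilinear form. -/
lemma cs_aux {V : Type*} [AddCommGroup V] [Module ℝ V]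
    (b : LinearMap.BilinForm ℝ V) (hsymm : ∀ u v, b u v = b v u)
    (hpos : ∀ v : V, v ≠ 0 → 0 < b v v) (v y : V)
    (hvy : LinearIndependent ℝ ![v, y]) :
    0 < b y y * b v v - b v y ^ 2 := by
  have hy : y ≠ 0 := by
    have := hvy.ne_zero 1
    simpa using this
  have hyy : 0 < b y y := hpos y hy
  set c : ℝ := b v y / b y y with hc
  have hw : v - c • y ≠ 0 := by
    intro h
    have hv : v = c • y := by rwa [sub_eq_zero] at h
    rcases LinearIndependent.pair_iff.mp hvy 1 (-c) (by simp [hv]) with ⟨h1, _⟩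
    exact one_ne_zero h1
  have hpw := hpos _ hw
  have hexp : b (v - c • y) (v - c • y)
      = b v v - 2 * c * b v y + c ^ 2 * b y y := by
    simp only [map_sub, map_smul, LinearMap.sub_apply, LinearMap.smul_apply,
      smul_eq_mul, hsymm y v]
    ring
  rw [hexp, hc] at hpw
  have h1 : b v v - (b v y) ^ 2 / b y y > 0 := by
    have : b v v - 2 * (b v y / b y y) * b v y + (b v y / b y y) ^ 2 * b y y
        = b v v - (b v y) ^ 2 / b y y := by field_simp; ring
    linarith [this ▸ hpw]
  have := mul_pos hyy h1
  calc (0:ℝ) < b y y * (b v v - (b v y) ^ 2 / b y y) := this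
    _ = b y y * b v v - b v y ^ 2 := by field_simp

/-- negative flag curvature with respect to `g` implies negative sectional
curvature with respect to `h`, for `A = A_y` h-self-adjoint with `A y = 0`. -/
theorem stmt6 (V : Type*) [NormedAddCommGroup V] [InnerProductSpace ℝ V]
    [FiniteDimensional ℝ V]
    (g : LinearMap.BilinForm ℝ V) (hgsymm : ∀ u v, g u v = g v u)
    (hgpos : ∀ v : V, v ≠ 0 → 0 < g v v)
    (A : V →ₗ[ℝ] V) (hA : ∀ u w : V, ⟪A u, w⟫ = ⟪u, A w⟫)
    (y : V) (hy : y ≠ 0) (hAy : A y = 0)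
    (hneg : ∀ v : V, LinearIndependent ℝ ![v, y] →
      g v (A v) / (g y y * g v v - g v y ^ 2) < 0) :
    ∀ v : V, LinearIndependent ℝ ![v, y] →
      ⟪v, A v⟫ / (⟪y, y⟫ * ⟪v, v⟫ - ⟪v, y⟫ ^ 2) < 0 := by
  have hipos : ∀ x : V, x ≠ 0 → 0 < ⟪x, x⟫ := fun x hx =>
    lt_of_le_of_ne real_inner_self_nonneg
      (fun h => hx (inner_self_eq_zero.mp h.symm))
  -- numerator of g-curvature is negative
  have hnum : ∀ v : V, LinearIndependent ℝ ![v, y] → g v (A v) < 0 := by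
    intro v hv
    have hden := cs_aux g hgsymm hgpos v y hv
    have := hneg v hv
    by_contra h
    push_neg at h
    exact absurd (div_nonneg h hden.le) (not_le.mpr this)
  -- orthogonal-to-y vectors are linearly independent from y
  have hindep : ∀ w : V, w ≠ 0 → ⟪w, y⟫ = 0 → LinearIndependent ℝ ![w, y] := by
    intro w hw hwy
    rw [LinearIndependent.pair_iff]
    intro s t hst
    have h1 : ⟪w, s • w + t • y⟫ = 0 := by rw [hst]; simp
    have h2 : ⟪y, s • w + t • y⟫ = 0 := by rw [hst]; simp
    rw [inner_add_right, real_inner_smul_right, real_inner_smul_right, hwy] at h1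
    have hyw : ⟪y, w⟫ = 0 := by rw [real_inner_comm]; exact hwy
    rw [inner_add_right, real_inner_smul_right, real_inner_smul_right, hyw] at h2
    have hww : 0 < ⟪w, w⟫ := hipos w hw
    have hyy : 0 < ⟪y, y⟫ := hipos y hy
    constructor
    · nlinarith
    · nlinarith
  -- the orthogonal complement of y
  set K : Submodule ℝ V := (ℝ ∙ y)ᗮ with hK
  have hmemK : ∀ w : V, w ∈ K ↔ ⟪y, w⟫ = 0 := fun w =>
    Submodule.mem_orthogonal_singleton_iff_inner_right
  have hAK : ∀ w ∈ K, A w ∈ K := by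
    intro w hw
    rw [hmemK]
    rw [← hA, hAy, inner_zero_left]
  have hcomp : CompleteSpace K := FiniteDimensional.complete ℝ K
  let T : K →L[ℝ] K := LinearMap.toContinuousLinearMap (A.restrict hAK)
  have hTapp : ∀ x : K, (T x : V) = A (x : V) := fun x => rfl
  have hTsym : (T : K →ₗ[ℝ] K).IsSymmetric := by
    intro u w
    rw [Submodule.coe_inner, Submodule.coe_inner]
    exact hA u w
  have hTsa : IsSelfAdjoint T := ContinuousLinearMap.isSelfAdjoint_iff_isSymmetric.mpr hTsym
  -- key: negative on the orthogonal complement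
  have hkey : ∀ w : V, w ∈ K → w ≠ 0 → ⟪w, A w⟫ < 0 := by
    intro w hwK hw
    -- maximize on the unit sphere of K
    have hwK' : (⟨w, hwK⟩ : K) ≠ 0 := by simpa using hw
    have hn1 : ‖(‖(⟨w, hwK⟩ : K)‖⁻¹ • (⟨w, hwK⟩ : K))‖ = 1 := by
      rw [norm_smul, norm_inv, norm_norm]
      exact inv_mul_cancel₀ (norm_ne_zero_iff.mpr hwK')
    have hsne : (Metric.sphere (0 : K) 1).Nonempty :=
      ⟨_, mem_sphere_zero_iff_norm.mpr hn1⟩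
    obtain ⟨x₀, hx₀mem, hx₀max⟩ := (isCompact_sphere (0 : K) 1).exists_isMaxOn hsne
      T.reApplyInnerSelf_continuous.continuousOn
    have hx₀norm : ‖x₀‖ = 1 := by simpa using hx₀mem
    have hx₀ne : x₀ ≠ 0 := by
      intro h; rw [h] at hx₀norm; simp at hx₀norm
    have hmax' : IsMaxOn T.reApplyInnerSelf (Metric.sphere (0 : K) ‖x₀‖) x₀ := by
      rwa [hx₀norm]
    have heig : T x₀ = T.rayleighQuotient x₀ • x₀ :=
      hTsa.eq_smul_self_of_isLocalExtrOn_real (Or.inr hmax'.localize)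
    set lam : ℝ := T.rayleighQuotient x₀ with hlam
    -- lam < 0 via g
    have hx₀V : (x₀ : V) ≠ 0 := fun h => hx₀ne (Subtype.coe_injective (by simpa using h))
    have hx₀y : ⟪(x₀ : V), y⟫ = 0 := by
      rw [real_inner_comm]; exact (hmemK _).mp x₀.2
    have hAx₀ : A (x₀ : V) = lam • (x₀ : V) := by
      rw [← hTapp, heig]; rfl
    have hgneg := hnum (x₀ : V) (hindep _ hx₀V hx₀y)
    rw [hAx₀, map_smul, smul_eq_mul] at hgneg
    have hgpos' := hgpos _ hx₀V
    have hlamneg : lam < 0 := by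
      by_contra h
      push_neg at h
      nlinarith
    -- rayleigh quotient at x₀ equals reApplyInnerSelf x₀
    have hray : T.reApplyInnerSelf x₀ = lam := by
      rw [hlam, ContinuousLinearMap.rayleighQuotient, hx₀norm]
      norm_num
    -- bound for w
    set u : K := ‖(⟨w, hwK⟩ : K)‖⁻¹ • ⟨w, hwK⟩ with hu
    have humem : u ∈ Metric.sphere (0 : K) 1 := mem_sphere_zero_iff_norm.mpr hn1
    have hle : T.reApplyInnerSelf u ≤ lam := hray ▸ hx₀max humem
    have hwnorm : (0:ℝ) < ‖w‖ := norm_pos_iff.mpr hw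
    have hKnorm : ‖(⟨w, hwK⟩ : K)‖ = ‖w‖ := rfl
    have hval : T.reApplyInnerSelf u = ‖w‖⁻¹ ^ 2 * ⟪w, A w⟫ := by
      rw [hu, ContinuousLinearMap.reApplyInnerSelf_smul]
      rw [ContinuousLinearMap.reApplyInnerSelf_apply]
      rw [Submodule.coe_inner, hTapp]
      simp only [hKnorm, norm_inv, norm_norm, RCLike.re_to_real]
      rw [real_inner_comm]
    have h2 : ‖w‖⁻¹ ^ 2 * ⟪w, A w⟫ < 0 := lt_of_le_of_lt (hval ▸ hle) hlamneg
    nlinarith [h2, pow_pos (inv_pos.mpr hwnorm) 2]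
  -- final assembly
  intro v hv
  have hden : 0 < ⟪y, y⟫ * ⟪v, v⟫ - ⟪v, y⟫ ^ 2 := by
    have := cs_aux (innerₗ V)
      (fun u v => by simpa using real_inner_comm v u)
      (fun x hx => by simpa using hipos x hx) v y hv
    simpa using this
  have hyy : 0 < ⟪y, y⟫ := hipos y hy
  set c : ℝ := ⟪v, y⟫ / ⟪y, y⟫ with hc
  set w : V := v - c • y with hwdef
  have hwy : ⟪w, y⟫ = 0 := by
    rw [hwdef, inner_sub_left, real_inner_smul_left, hc]
    field_simp
    ring
  have hwne : w ≠ 0 := by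
    intro h
    have hveq : v = c • y := by rwa [hwdef, sub_eq_zero] at h
    rcases LinearIndependent.pair_iff.mp hv 1 (-c) (by simp [hveq]) with ⟨h1, _⟩
    exact one_ne_zero h1
  have hwK : w ∈ K := (hmemK w).mpr (by rw [real_inner_comm]; exact hwy)
  have hAvw : A v = A w := by
    rw [hwdef, map_sub, map_smul, hAy, smul_zero, sub_zero]
  have hnumh : ⟪v, A v⟫ = ⟪w, A w⟫ := by
    have hyAw : ⟪y, A w⟫ = 0 := by rw [← hA, hAy, inner_zero_left]
    have : v = w + c • y := by rw [hwdef]; abel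
    rw [hAvw, this, inner_add_left, real_inner_smul_left, hyAw, mul_zero, add_zero]
  rw [hnumh]
  exact div_neg_of_neg_of_pos (hkey w hwK hwne) hden
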